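/- Let φ be a (σ,ε)-sesquilinear form on V. If there exists a maximal totally isotropic subspace of V of finite dimension, then φ admits a Witt index: any two maximal totally isotropic subspaces of V have the same (finite) dimension. -/

import Mathlib

open MulOpposite

variable {K : Type*} [DivisionRing K]

/-- `σ` is an anti-automorphism of the division ring `K`. -/
def IsAntiAuto (σ : K → K) : Prop :=
  Function.Bijective σ ∧ (∀ a b : K, σ (a + b) = σ a + σ b) ∧
    ∀ a b : K, σ (a * b) = σ b * σ a

/-- `(σ, ε)` is an admissible pair: `σ` is an anti-automorphism, `ε ≠ 0`,
`σ ε = ε⁻¹` and `σ ∘ σ` is conjugation by `ε`. -/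
def IsAdmissiblePair (σ : K → K) (ε : K) : Prop :=
  IsAntiAuto σ ∧ ε ≠ 0 ∧ σ ε = ε⁻¹ ∧ ∀ t : K, σ (σ t) = ε * t * ε⁻¹

variable {V : Type*} [AddCommGroup V] [Module Kᵐᵒᵖ V]

/-- `φ` is a reflexive `(σ, ε)`-sesquilinear form on the right `K`-vector space `V`
(a right `K`-vector space is a left `Kᵐᵒᵖ`-vector space; right scalar multiplication
of `x` by `α` is `op α • x`). -/
def IsSesq (σ : K → K) (ε : K) (φ : V → V → K) : Prop :=
  (∀ x y z : V, φ (x + y) z = φ x z + φ y z) ∧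
  (∀ x y z : V, φ x (y + z) = φ x y + φ x z) ∧
  (∀ (α : K) (x y : V), φ (op α • x) y = σ α * φ x y) ∧
  (∀ (β : K) (x y : V), φ x (op β • y) = φ x y * β) ∧
  ∀ x y : V, φ y x = σ (φ x y) * ε

/-- A subspace `S` of `V` is totally isotropic for `φ` if `φ` vanishes identically on it. -/
def IsTotIso (φ : V → V → K) (S : Submodule Kᵐᵒᵖ V) : Prop :=
  ∀ x ∈ S, ∀ y ∈ S, φ x y = 0

/-- A maximal totally isotropic subspace: totally isotropic and maximal under inclusion
among totally isotropic subspaces. -/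
def IsMaxTotIso (φ : V → V → K) (S : Submodule Kᵐᵒᵖ V) : Prop :=
  IsTotIso φ S ∧ ∀ T : Submodule Kᵐᵒᵖ V, IsTotIso φ T → S ≤ T → T = S

/-- `φ` is trace-valued: every `φ(x,x)` is of the form `t + σ(t)ε`. -/
def IsTraceValued (σ : K → K) (ε : K) (φ : V → V → K) : Prop :=
  ∀ x : V, ∃ t : K, φ x x = t + σ t * ε

lemma aux_rank_le_of_semilinear {R S : Type*} [DivisionRing R] [DivisionRing S]
    {A : Type*} {B : Type*} [AddCommGroup A] [Module R A] [AddCommGroup B] [Module S B]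
    (e : R ≃+* S) (f : A → B) (hadd : ∀ x y, f (x + y) = f x + f y)
    (hsmul : ∀ (r : R) (x : A), f (r • x) = e r • f x)
    (hker : ∀ x, f x = 0 → x = 0) (n : ℕ) (hB : Module.rank S B ≤ n) :
    Module.rank R A ≤ n := by
  apply rank_le
  intro s hs
  let j : A →+ B := AddMonoidHom.mk' f hadd
  have indep : LinearIndependent S (j ∘ fun i : s => (i : A)) := by
    refine hs.map_of_injective_injective (fun t : S => e.symm t) j
      (fun r hr => ?_) (fun m hm => hker m hm) (fun r m => ?_)
    · have := congrArg e hr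
      simpa using this
    · show f (e.symm r • m) = r • f m
      rw [hsmul, RingEquiv.apply_symm_apply]
  have h1 := indep.cardinal_lift_le_rank
  rw [Cardinal.mk_coe_finset] at h1
  have h2 : Cardinal.lift.{_} (Module.rank S B) ≤ Cardinal.lift.{_} ((n : Cardinal)) :=
    Cardinal.lift_le.mpr hB
  have h3 := h1.trans h2
  rw [Cardinal.lift_natCast, Cardinal.lift_natCast, Nat.cast_le] at h3
  exact h3

lemma aux_compl {R V : Type*} [DivisionRing R] [AddCommGroup V] [Module R V]
    (p q : Submodule R V) (h : p ≤ q) :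
    ∃ r : Submodule R V, r ≤ q ∧ p ⊓ r = ⊥ ∧ p ⊔ r = q := by
  obtain ⟨r', hr'⟩ := Submodule.exists_isCompl (p.comap q.subtype)
  have hp : (p.comap q.subtype).map q.subtype = p := by
    rw [Submodule.map_comap_subtype, inf_eq_right.mpr h]
  refine ⟨r'.map q.subtype, Submodule.map_subtype_le _ _, ?_, ?_⟩
  · rw [← hp, ← Submodule.map_inf _ (Submodule.injective_subtype q), hr'.inf_eq_bot,
      Submodule.map_bot]
  · rw [← hp, ← Submodule.map_sup, hr'.sup_eq_top, Submodule.map_top, Submodule.range_subtype]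

/-- Core lemma: a totally isotropic subspace has rank at most that of any finite-dimensional
maximal totally isotropic subspace. -/
lemma aux_core (σ : K → K) (ε : K) (hpair : IsAdmissiblePair σ ε)
    (φ : V → V → K) (hφ : IsSesq σ ε φ)
    (M N : Submodule Kᵐᵒᵖ V) (hM : IsMaxTotIso φ M) (hMfin : FiniteDimensional Kᵐᵒᵖ ↥M)
    (hN : IsTotIso φ N) : Module.rank Kᵐᵒᵖ ↥N ≤ Module.rank Kᵐᵒᵖ ↥M := by
  obtain ⟨⟨hσbij, hσadd, hσmul⟩, -, -, -⟩ := hpair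
  obtain ⟨hadd1, hadd2, hsml, hsmr, hrefl⟩ := hφ
  have hσ0 : σ 0 = 0 := by
    have h := hσadd 0 0
    rw [add_zero] at h
    exact (left_eq_add.mp h).symm ▸ rfl
  have hrefl0 : ∀ x y : V, φ x y = 0 → φ y x = 0 := fun x y h => by
    rw [hrefl x y, h, hσ0, zero_mul]
  -- the ring isomorphism Kᵐᵒᵖ ≃+* K induced by σ
  let σe : K ≃ K := Equiv.ofBijective σ hσbij
  let e : Kᵐᵒᵖ ≃+* K :=
    { toFun := fun a => σ (unop a)
      invFun := fun b => op (σe.symm b)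
      left_inv := fun a => by
        have : σe.symm (σe (unop a)) = unop a := σe.symm_apply_apply _
        simpa [σe, Equiv.ofBijective] using congrArg op this
      right_inv := fun b => by
        have : σe (σe.symm b) = b := σe.apply_symm_apply _
        simpa [σe, Equiv.ofBijective] using this
      map_mul' := fun a b => by
        show σ (unop (a * b)) = σ (unop a) * σ (unop b)
        rw [unop_mul, hσmul]
      map_add' := fun a b => by
        show σ (unop (a + b)) = σ (unop a) + σ (unop b)
        rw [unop_add, hσadd] }
  set W : Submodule Kᵐᵒᵖ V := M ⊓ N with hWdef
  obtain ⟨C, hCM, hWCi, hWCs⟩ := aux_compl W M inf_le_left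
  obtain ⟨D, hDN, hWDi, hWDs⟩ := aux_compl W N inf_le_right
  haveI hCfin : FiniteDimensional Kᵐᵒᵖ ↥C := Submodule.finiteDimensional_of_le hCM
  -- the functional map
  let F : V → (↥C →ₗ[Kᵐᵒᵖ] K) := fun n =>
    { toFun := fun c => φ n (c : V)
      map_add' := fun c c' => hadd2 n c c'
      map_smul' := fun β c => by
        show φ n (β • (c : V)) = β • φ n (c : V)
        rw [← op_unop β, hsmr]
        rfl }
  set d : ℕ := Module.finrank Kᵐᵒᵖ ↥C with hd
  let b : Module.Basis (Fin d) Kᵐᵒᵖ ↥C := Module.finBasis Kᵐᵒᵖ ↥C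
  let f : ↥D → (Fin d → K) := fun x i => φ (x : V) (b i)
  have hfadd : ∀ x y : ↥D, f (x + y) = f x + f y := by
    intro x y
    funext i
    exact hadd1 x y (b i)
  have hfsmul : ∀ (r : Kᵐᵒᵖ) (x : ↥D), f (r • x) = e r • f x := by
    intro r x
    funext i
    show φ ((r • x : ↥D) : V) (b i) = σ (unop r) * φ (x : V) (b i)
    rw [Submodule.coe_smul, ← op_unop r, hsml]
    rfl
  have hfker : ∀ x : ↥D, f x = 0 → x = 0 := by
    intro x hx
    have hxN : (x : V) ∈ N := hDN x.2
    have hF0 : F (x : V) = 0 := b.ext fun i => congrFun hx i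
    have hφC : ∀ c ∈ C, φ (x : V) c = 0 := fun c hc =>
      congrArg (fun g : ↥C →ₗ[Kᵐᵒᵖ] K => g ⟨c, hc⟩) hF0
    have hφM : ∀ m ∈ M, φ (x : V) m = 0 := by
      intro m hm
      rw [← hWCs] at hm
      obtain ⟨w, hw, c, hc, rfl⟩ := Submodule.mem_sup.mp hm
      rw [hadd2, hφC c hc, hN x hxN w hw.2, add_zero]
    have htot : IsTotIso φ (M ⊔ Submodule.span Kᵐᵒᵖ {(x : V)}) := by
      intro a ha b' hb
      obtain ⟨ma, hma, sa, hsa, rfl⟩ := Submodule.mem_sup.mp ha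
      obtain ⟨mb, hmb, sb, hsb, rfl⟩ := Submodule.mem_sup.mp hb
      obtain ⟨αa, rfl⟩ := Submodule.mem_span_singleton.mp hsa
      obtain ⟨αb, rfl⟩ := Submodule.mem_span_singleton.mp hsb
      have hxx : φ (x : V) (x : V) = 0 := hN x hxN x hxN
      have h1 : φ ma mb = 0 := hM.1 ma hma mb hmb
      have h2 : φ ma ((x : V)) = 0 := hrefl0 _ _ (hφM ma hma)
      have h3 : φ (x : V) mb = 0 := hφM mb hmb
      rw [hadd1, hadd2, hadd2, ← op_unop αa, ← op_unop αb, hsml, hsml, hsmr, hsmr,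
        h1, h2, h3, hxx]
      simp
    have hMeq := hM.2 _ htot le_sup_left
    have hxM : (x : V) ∈ M := by
      rw [← hMeq]
      exact Submodule.mem_sup_right (Submodule.mem_span_singleton_self _)
    have hxWD : (x : V) ∈ W ⊓ D := ⟨⟨hxM, hxN⟩, x.2⟩
    rw [hWDi] at hxWD
    exact Subtype.ext (by simpa using hxWD)
  have hDle : Module.rank Kᵐᵒᵖ ↥D ≤ (d : Cardinal) :=
    aux_rank_le_of_semilinear e f hfadd hfsmul hfker d (rank_fin_fun d).le
  have hCeq : Module.rank Kᵐᵒᵖ ↥C = (d : Cardinal) := (Module.finrank_eq_rank _ _).symm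
  have h1 := Submodule.rank_sup_add_rank_inf_eq W D
  rw [hWDs, hWDi, rank_bot, add_zero] at h1
  have h2 := Submodule.rank_sup_add_rank_inf_eq W C
  rw [hWCs, hWCi, rank_bot, add_zero] at h2
  rw [h1, h2, hCeq]
  exact add_le_add le_rfl hDle

/-- If some maximal totally isotropic subspace has finite dimension, then
`φ` admits a Witt index: any two maximal totally isotropic subspaces have the same
(finite) dimension. -/

theorem stmt_2 (σ : K → K) (ε : K) (hpair : IsAdmissiblePair σ ε)
    (φ : V → V → K) (hφ : IsSesq σ ε φ)
    (hex : ∃ M : Submodule Kᵐᵒᵖ V, IsMaxTotIso φ M ∧ FiniteDimensional Kᵐᵒᵖ ↥M) :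
    ∀ M M' : Submodule Kᵐᵒᵖ V, IsMaxTotIso φ M → IsMaxTotIso φ M' →
      FiniteDimensional Kᵐᵒᵖ ↥M ∧ Module.rank Kᵐᵒᵖ ↥M = Module.rank Kᵐᵒᵖ ↥M' := by
  obtain ⟨M₀, hM₀, hfin₀⟩ := hex
  have fin : ∀ M : Submodule Kᵐᵒᵖ V, IsMaxTotIso φ M → FiniteDimensional Kᵐᵒᵖ ↥M := by
    intro M hM
    have h := aux_core σ ε hpair φ hφ M₀ M hM₀ hfin₀ hM.1
    exact Module.rank_lt_aleph0_iff.mp (h.trans_lt (Module.rank_lt_aleph0 _ _))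
  intro M M' hM hM'
  have h1 := fin M hM
  have h2 := fin M' hM'
  exact ⟨h1, le_antisymm (aux_core σ ε hpair φ hφ M' M hM' h2 hM.1)
    (aux_core σ ε hpair φ hφ M M' hM h1 hM'.1)⟩
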